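/- Cohen–Kaplansky S-version: Let S be a multiplicatively closed subset of an r-lattice L. Then L is S-Noetherian (every element is S-compact) if and only if every S-prime element of L is S-compact. -/

import Mathlib

open CompleteLattice

class MulLattice (L : Type*) extends CompleteLattice L, CommMonoid L where
  mul_sSup : ∀ (a : L) (s : Set L), a * sSup s = ⨆ b ∈ s, a * b
  one_eq_top : (1 : L) = ⊤

variable {L : Type*} [MulLattice L]

/-- Residual `(a : b)`. -/
def mres (a b : L) : L := sSup {x : L | x * b ≤ a}

/-- Lattice-theoretic radical. -/
def rad (a : L) : L :=
  sSup {x : L | IsCompactElement x ∧ ∃ n : ℕ, 0 < n ∧ x ^ n ≤ a}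

def IsMeetPrincipal (m : L) : Prop :=
  ∀ a b : L, a ⊓ m * b = m * (mres a m ⊓ b)

def IsJoinPrincipal (m : L) : Prop :=
  ∀ a b : L, a ⊔ mres b m = mres (a * m ⊔ b) m

def IsPrincipal (m : L) : Prop := IsMeetPrincipal m ∧ IsJoinPrincipal m

/-- A multiplicatively closed subset of compact elements with `1 ∈ S`, `0 ∉ S`. -/
def MultClosed (S : Set L) : Prop :=
  (∀ s ∈ S, IsCompactElement s) ∧ (1 : L) ∈ S ∧ (⊥ : L) ∉ S ∧
    ∀ s ∈ S, ∀ t ∈ S, s * t ∈ S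

def SCompact (S : Set L) (a : L) : Prop :=
  ∃ s ∈ S, ∃ b : L, IsCompactElement b ∧ s * a ≤ b ∧ b ≤ a

def SPrime (S : Set L) (p : L) : Prop :=
  p ≠ ⊤ ∧ (∀ t ∈ S, ¬ t ≤ p) ∧
    ∃ s ∈ S, ∀ a b : L, a * b ≤ p → s * a ≤ p ∨ s * b ≤ p

def SPrimary (S : Set L) (q : L) : Prop :=
  q ≠ ⊤ ∧ (∀ t ∈ S, ¬ t ≤ q) ∧
    ∃ s ∈ S, ∀ c d : L, c * d ≤ q → s * c ≤ q ∨ s * d ≤ rad q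

def Ssat (S : Set L) (a : L) : L := sSup {x : L | ∃ s ∈ S, s * x ≤ a}

class RLattice (L : Type*) extends MulLattice L where
  modular : ∀ a b c : L, a ≤ c → a ⊔ (b ⊓ c) = (a ⊔ b) ⊓ c
  principally_generated : ∀ a : L, a = sSup {m : L | IsPrincipal m ∧ m ≤ a}
  compactly_generated : ∀ a : L, a = sSup {c : L | IsCompactElement c ∧ c ≤ a}
  top_compact : IsCompactElement (⊤ : L)

class CLattice (L : Type*) extends MulLattice L where
  compactly_generated : ∀ a : L, a = sSup {c : L | IsCompactElement c ∧ c ≤ a}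
  top_compact : IsCompactElement (⊤ : L)
  compact_mul : ∀ a b : L, IsCompactElement a → IsCompactElement b →
    IsCompactElement (a * b)


section Aux

variable {L : Type*} [MulLattice L]

lemma ML.mul_sup (a b c : L) : a * (b ⊔ c) = a * b ⊔ a * c := by
  have h := MulLattice.mul_sSup a {b, c}
  rw [sSup_pair, iSup_pair] at h
  exact h

lemma ML.mul_le_mul_left' (a : L) {b c : L} (h : b ≤ c) : a * b ≤ a * c := by
  have : a * c = a * b ⊔ a * c := by rw [← ML.mul_sup, sup_eq_right.mpr h]
  rw [this]; exact le_sup_left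

lemma ML.mul_le_mul_right' {b c : L} (h : b ≤ c) (a : L) : b * a ≤ c * a := by
  rw [mul_comm b a, mul_comm c a]; exact ML.mul_le_mul_left' a h

lemma ML.mul_le_left (a b : L) : a * b ≤ a := by
  have hb : b ≤ (1 : L) := by rw [MulLattice.one_eq_top]; exact le_top
  calc a * b ≤ a * 1 := ML.mul_le_mul_left' a hb
    _ = a := mul_one a

lemma ML.mul_le_right (a b : L) : a * b ≤ b := by
  rw [mul_comm]; exact ML.mul_le_left b a

lemma ML.mres_mul_le (a b : L) : mres a b * b ≤ a := by
  rw [mul_comm, mres, MulLattice.mul_sSup]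
  apply iSup_le; intro x; apply iSup_le; intro hx
  rw [mul_comm]; exact hx

lemma ML.le_mres {x a b : L} : x ≤ mres a b ↔ x * b ≤ a := by
  constructor
  · intro h
    calc x * b ≤ mres a b * b := ML.mul_le_mul_right' h b
      _ ≤ a := ML.mres_mul_le a b
  · intro h; exact le_sSup h

lemma ML.le_mres_self (a b : L) : a ≤ mres a b :=
  ML.le_mres.mpr (ML.mul_le_left a b)

lemma ML.mres_mono {a a' : L} (h : a ≤ a') (b : L) : mres a b ≤ mres a' b :=
  sSup_le_sSup (fun x hx => le_trans hx h)

lemma ML.bot_compact {α : Type*} [CompleteLattice α] : IsCompactElement (⊥ : α) :=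
  (isCompactElement_iff_exists_le_sSup_of_le_sSup _ _).mpr fun _ _ => ⟨∅, by simp⟩

lemma ML.sup_compact {α : Type*} [CompleteLattice α] {a b : α}
    (ha : IsCompactElement a) (hb : IsCompactElement b) : IsCompactElement (a ⊔ b) := by
  classical
  rw [isCompactElement_iff_exists_le_sSup_of_le_sSup] at ha hb ⊢
  intro s hs
  obtain ⟨t1, ht1, h1⟩ := ha s (le_trans le_sup_left hs)
  obtain ⟨t2, ht2, h2⟩ := hb s (le_trans le_sup_right hs)
  refine ⟨t1 ∪ t2, ?_, ?_⟩
  · intro x hx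
    rcases Finset.mem_union.mp (by exact_mod_cast hx) with h | h
    · exact ht1 h
    · exact ht2 h
  · exact sup_le (h1.trans (Finset.sup_mono Finset.subset_union_left))
      (h2.trans (Finset.sup_mono Finset.subset_union_right))

end Aux

section RAux

variable {L : Type*} [RLattice L]

/-- In a compactly generated lattice, any element below a directed sup is the sup of
its meets with the members. -/
lemma ML.le_sSup_inf {A : Set L} (hA : A.Nonempty) (hdir : DirectedOn (· ≤ ·) A)
    {b : L} (hb : b ≤ sSup A) : b ≤ sSup ((fun a => b ⊓ a) '' A) := by
  conv_lhs => rw [RLattice.compactly_generated b]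
  apply _root_.sSup_le
  rintro c ⟨hc, hcb⟩
  obtain ⟨a, haA, hca⟩ :=
    (isCompactElement_iff_le_of_directed_sSup_le L c).mp hc A hA hdir (hcb.trans hb)
  exact le_sSup_of_le ⟨a, haA, rfl⟩ (le_inf hcb hca)

lemma ML.exists_compact_join {p m c : L} (hc : IsCompactElement c) (h : c ≤ p ⊔ m) :
    ∃ e : L, IsCompactElement e ∧ e ≤ p ∧ c ≤ e ⊔ m := by
  set D : Set L := {x | ∃ e : L, IsCompactElement e ∧ e ≤ p ∧ x = e ⊔ m} with hD
  have hne : D.Nonempty := ⟨⊥ ⊔ m, ⊥, ML.bot_compact, bot_le, rfl⟩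
  have hdir : DirectedOn (· ≤ ·) D := by
    rintro _ ⟨e1, he1, he1p, rfl⟩ _ ⟨e2, he2, he2p, rfl⟩
    exact ⟨(e1 ⊔ e2) ⊔ m, ⟨e1 ⊔ e2, ML.sup_compact he1 he2, sup_le he1p he2p, rfl⟩,
      sup_le (le_sup_of_le_left le_sup_left) le_sup_right,
      sup_le (le_sup_of_le_left le_sup_right) le_sup_right⟩
  have hsup : p ⊔ m ≤ sSup D := by
    apply sup_le
    · conv_lhs => rw [RLattice.compactly_generated p]
      apply _root_.sSup_le
      rintro e ⟨he, hep⟩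
      exact le_trans le_sup_left (le_sSup ⟨e, he, hep, rfl⟩)
    · exact le_trans le_sup_right (le_sSup ⟨⊥, ML.bot_compact, bot_le, rfl⟩)
  obtain ⟨x, ⟨e, he, hep, rfl⟩, hcx⟩ :=
    (isCompactElement_iff_le_of_directed_sSup_le L c).mp hc D hne hdir (h.trans hsup)
  exact ⟨e, he, hep, hcx⟩

/-- Product of a principal element with a compact element is compact. -/
lemma ML.principal_mul_compact {m d : L} (hm : IsPrincipal m) (hd : IsCompactElement d) :
    IsCompactElement (m * d) := by
  rw [isCompactElement_iff_le_of_directed_sSup_le]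
  intro A hne hdir hle
  set y : L := mres (sSup A) m with hy
  have hdy : d ≤ y := ML.le_mres.mpr (by rw [mul_comm]; exact hle)
  have hym : y * m ≤ sSup A := ML.mres_mul_le _ _
  set n : L := mres ⊥ m with hn
  -- y*m ≤ sup over a of m * (mres a m ⊓ y)
  have h1 : y * m ≤ sSup ((fun a => y * m ⊓ a) '' A) := ML.le_sSup_inf hne hdir hym
  set z : L := sSup ((fun a => mres a m ⊓ y) '' A) with hz
  have h2 : y * m ≤ m * z := by
    refine h1.trans ?_
    apply _root_.sSup_le
    rintro _ ⟨a, haA, rfl⟩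
    show y * m ⊓ a ≤ m * z
    have : y * m ⊓ a = a ⊓ m * y := by rw [inf_comm, mul_comm]
    rw [this, hm.1 a y]
    exact ML.mul_le_mul_left' m (le_sSup ⟨a, haA, rfl⟩)
  have h3 : y ≤ z ⊔ n := by
    have hjp := hm.2 z ⊥
    have : y ≤ mres (z * m ⊔ ⊥) m := by
      apply ML.le_mres.mpr
      refine le_trans ?_ le_sup_left
      rw [mul_comm z m]; exact h2
    rw [← hjp] at this; exact this
  -- the family (mres a m ⊓ y) ⊔ n over A is directed with sup ≥ y
  set E : Set L := (fun a => (mres a m ⊓ y) ⊔ n) '' A with hE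
  have hEne : E.Nonempty := hne.image _
  have hEdir : DirectedOn (· ≤ ·) E := by
    rintro _ ⟨a1, ha1, rfl⟩ _ ⟨a2, ha2, rfl⟩
    obtain ⟨a3, ha3, h13, h23⟩ := hdir a1 ha1 a2 ha2
    refine ⟨(mres a3 m ⊓ y) ⊔ n, ⟨a3, ha3, rfl⟩, ?_, ?_⟩
    · exact sup_le (le_sup_of_le_left (inf_le_inf_right y (ML.mres_mono h13 m))) le_sup_right
    · exact sup_le (le_sup_of_le_left (inf_le_inf_right y (ML.mres_mono h23 m))) le_sup_right
  have hdE : d ≤ sSup E := by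
    refine hdy.trans (h3.trans ?_)
    apply sup_le
    · apply _root_.sSup_le
      rintro _ ⟨a, haA, rfl⟩
      exact le_trans le_sup_left (le_sSup ⟨a, haA, rfl⟩)
    · obtain ⟨a0, ha0⟩ := hne
      exact le_trans le_sup_right (le_sSup ⟨a0, ha0, rfl⟩)
  obtain ⟨_, ⟨a, haA, rfl⟩, hda⟩ :=
    (isCompactElement_iff_le_of_directed_sSup_le L d).mp hd E hEne hEdir hdE
  refine ⟨a, haA, ?_⟩
  calc m * d ≤ m * ((mres a m ⊓ y) ⊔ n) := ML.mul_le_mul_left' m hda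
    _ = m * (mres a m ⊓ y) ⊔ m * n := ML.mul_sup _ _ _
    _ ≤ (mres a m * m) ⊔ (mres ⊥ m * m) := by
        apply sup_le
        · exact le_sup_of_le_left
            (le_trans (ML.mul_le_mul_left' m inf_le_left) (le_of_eq (mul_comm _ _)))
        · exact le_sup_of_le_right (le_of_eq (mul_comm _ _))
    _ ≤ a ⊔ (⊥ : L) := sup_le_sup (ML.mres_mul_le a m) (ML.mres_mul_le ⊥ m)
    _ = a := sup_bot_eq a

end RAux

/-- Cohen–Kaplansky S-version. -/
theorem stmt11 {L : Type*} [RLattice L] (S : Set L) (hS : MultClosed S) :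
    (∀ a : L, SCompact S a) ↔ (∀ p : L, SPrime S p → SCompact S p) := by
  constructor
  · intro h p _
    exact h p
  · intro hprime
    by_contra hcon
    push_neg at hcon
    obtain ⟨a0, ha0⟩ := hcon
    set F : Set L := {x | ¬ SCompact S x} with hF
    have hzorn : ∀ c ⊆ F, IsChain (· ≤ ·) c → ∀ y ∈ c, ∃ ub ∈ F, ∀ z ∈ c, z ≤ ub := by
      intro c hcF hchain y hy
      refine ⟨sSup c, ?_, fun z hz => le_sSup hz⟩
      intro hsc
      obtain ⟨s, hsS, b, hb, h1, h2⟩ := hsc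
      obtain ⟨x, hxc, hbx⟩ := (isCompactElement_iff_le_of_directed_sSup_le L b).mp hb c
        ⟨y, hy⟩ hchain.directedOn h2
      exact hcF hxc ⟨s, hsS, b, hb, le_trans (ML.mul_le_mul_left' s (le_sSup hxc)) h1, hbx⟩
    obtain ⟨p, -, hpm⟩ := zorn_le_nonempty₀ F hzorn a0 ha0
    have hSc : ∀ q : L, p ≤ q → q ≠ p → SCompact S q := by
      intro q hpq hqp
      by_contra hq
      exact hqp (le_antisymm (hpm.2 hq hpq) hpq)
    refine hpm.1 (hprime p ⟨?_, ?_, 1, hS.2.1, ?_⟩)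
    · intro htop
      subst htop
      exact hpm.1 ⟨1, hS.2.1, ⊤, RLattice.top_compact, le_of_eq (one_mul ⊤), le_rfl⟩
    · intro t htS htp
      exact hpm.1 ⟨t, htS, t, hS.1 t htS, ML.mul_le_left t p, htp⟩
    · intro a b hab
      rw [one_mul, one_mul]
      by_contra hno
      push_neg at hno
      obtain ⟨hap, hbp⟩ := hno
      have hm : ∃ m : L, IsPrincipal m ∧ m ≤ a ∧ ¬ m ≤ p := by
        by_contra hcon2
        push_neg at hcon2
        apply hap
        conv_lhs => rw [RLattice.principally_generated a]
        apply _root_.sSup_le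
        rintro m ⟨hm1, hm2⟩
        exact hcon2 m hm1 hm2
      obtain ⟨m, hmP, hma, hmp⟩ := hm
      set k : L := mres p m with hk
      have hpk : p ≤ k := ML.le_mres_self p m
      have hbk : b ≤ k := by
        apply ML.le_mres.mpr
        rw [mul_comm]
        exact le_trans (ML.mul_le_mul_right' hma b) hab
      obtain ⟨t, htS, d, hd, htk, hdk⟩ := hSc k hpk (fun he => hbp (he ▸ hbk))
      obtain ⟨s, hsS, c, hc, hsj, hcj⟩ := hSc (p ⊔ m) le_sup_left
        (fun he => hmp (by rw [← he]; exact le_sup_right))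
      obtain ⟨e, he, hep, hce⟩ := ML.exists_compact_join hc hcj
      have hmk : m * k ≤ p := by rw [mul_comm]; exact ML.mres_mul_le p m
      have hsp : s * p ≤ e ⊔ m * k := by
        have h1 : s * p ≤ e ⊔ m :=
          le_trans (ML.mul_le_mul_left' s le_sup_left) (hsj.trans hce)
        have h3 : s * p ≤ (e ⊔ m) ⊓ p := le_inf h1 (ML.mul_le_right s p)
        have hmod := RLattice.modular e m p hep
        have hinf : m ⊓ p = m * k := by
          have hmp1 := hmP.1 p 1
          rw [mul_one, MulLattice.one_eq_top, inf_top_eq] at hmp1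
          rw [inf_comm]
          exact hmp1
        rw [← hmod, hinf] at h3
        exact h3
      have hfin : (s * t) * p ≤ e ⊔ m * d := by
        have hre : (s * t) * p = t * (s * p) := by
          rw [mul_comm s t, mul_assoc]
        rw [hre]
        calc t * (s * p) ≤ t * (e ⊔ m * k) := ML.mul_le_mul_left' t hsp
          _ = t * e ⊔ t * (m * k) := ML.mul_sup _ _ _
          _ ≤ e ⊔ m * d := by
              apply sup_le
              · exact le_sup_of_le_left (ML.mul_le_right t e)
              · refine le_sup_of_le_right ?_
                rw [mul_left_comm]
                exact ML.mul_le_mul_left' m htk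
      exact hpm.1 ⟨s * t, hS.2.2.2 s hsS t htS, e ⊔ m * d,
        ML.sup_compact he (ML.principal_mul_compact hmP hd),
        hfin, sup_le hep (le_trans (ML.mul_le_mul_left' m hdk) hmk)⟩
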